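/- arXiv:2504.12148 — 2 statements merged into one kernel-verified Lean document; each statement's English description precedes it below -/
import Mathlib

section
/- Let m, n ≥ 1, let G = G_{m×n} be the grid graph, let d = gcd(m+1, n+1), and let v = (a,b) be a vertex of G. If d does not divide a and d does not divide b, then the undirected edge geography position (G, v) is a P-position. -/
/-- P-positions of undirected edge geography on the edge set `F` with root `v`:
every move (removing an edge `s(v,w) ∈ F` and moving the root to `w`)
leads to a position that is not a P-position. -/
def UegPPos {V : Type} [DecidableEq V] (F : Finset (Sym2 V)) (v : V) : Prop :=
  ∀ w : V, ∀ h : s(v, w) ∈ F, ¬ UegPPos (F.erase s(v, w)) w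
termination_by F.card
decreasing_by exact Finset.card_erase_lt_of_mem h

/-- N-positions of undirected edge geography: some move leads to a P-position. -/
def UegNPos {V : Type} [DecidableEq V] (F : Finset (Sym2 V)) (v : V) : Prop :=
  ∃ w : V, ∃ _ : s(v, w) ∈ F, UegPPos (F.erase s(v, w)) w

/-- The grid graph `G_{m×n}`: the vertex `(i, j)` of the grid (with `1 ≤ i ≤ m`,
`1 ≤ j ≤ n`) is encoded as the pair `(⟨i-1, _⟩, ⟨j-1, _⟩) : Fin m × Fin n`;
two vertices `(i,j)` and `(i',j')` are adjacent iff `|i-i'| + |j-j'| = 1`. -/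
def gridGraph (m n : ℕ) : SimpleGraph (Fin m × Fin n) where
  Adj p q := ((p.1.val : ℤ) - q.1.val).natAbs + ((p.2.val : ℤ) - q.2.val).natAbs = 1
  symm := by constructor; intro p q h; omega
  loopless := by constructor; intro p h; omega

instance (m n : ℕ) : DecidableRel (gridGraph m n).Adj := fun p q =>
  inferInstanceAs
    (Decidable (((p.1.val : ℤ) - q.1.val).natAbs + ((p.2.val : ℤ) - q.2.val).natAbs = 1))

/-- An even kernel of a simple graph: a nonempty independent set `S` such that every
vertex not in `S` has an even number of neighbors in `S`. -/
def IsEvenKernel {V : Type} (G : SimpleGraph V) (S : Set V) : Prop :=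
  S.Nonempty ∧ (∀ u ∈ S, ∀ w ∈ S, ¬ G.Adj u w) ∧
    ∀ u, u ∉ S → Even {w | w ∈ S ∧ G.Adj u w}.ncard

theorem kernel_ppos_aux {V : Type} [DecidableEq V] (S : Finset V) :
    ∀ (N : ℕ) (F : Finset (Sym2 V)) (v : V), F.card ≤ N → v ∈ S →
      (∀ x ∈ S, ∀ y ∈ S, s(x, y) ∉ F) →
      (∀ x, x ∉ S → Even ((S.filter (fun y => s(x, y) ∈ F)).card)) →
      UegPPos F v := by
  intro N
  induction N with
  | zero =>
    intro F v hcard _ _ _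
    rw [UegPPos]
    intro w hw
    rw [Finset.card_eq_zero.mp (Nat.le_zero.mp hcard)] at hw
    simp at hw
  | succ N ih =>
    intro F v hcard hv hInd hEven
    rw [UegPPos]
    intro w hw hP
    have hwv : w ≠ v := fun h => hInd v hv v hv (h ▸ hw)
    have hwS : w ∉ S := fun hwS => hInd v hv w hwS hw
    set T := S.filter (fun y => s(w, y) ∈ F) with hT
    have hvT : v ∈ T := by
      simp only [hT, Finset.mem_filter]
      exact ⟨hv, by rwa [Sym2.eq_swap]⟩
    have hTeven : Even T.card := hEven w hwS
    -- get a second element u of T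
    have h2 : 2 ≤ T.card := by
      rcases hTeven with ⟨k, hk⟩
      have : 0 < T.card := Finset.card_pos.mpr ⟨v, hvT⟩
      omega
    have hne : (T.erase v).Nonempty := by
      rw [← Finset.card_pos, Finset.card_erase_of_mem hvT]; omega
    obtain ⟨u, hu⟩ := hne
    have huv : u ≠ v := Finset.ne_of_mem_erase hu
    have huT : u ∈ T := Finset.mem_of_mem_erase hu
    have huS : u ∈ S := (Finset.mem_filter.mp huT).1
    have huF : s(w, u) ∈ F := (Finset.mem_filter.mp huT).2
    have hwu : u ≠ w := fun h => hwS (h ▸ huS)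
    have hne1 : s(w, u) ≠ s(v, w) := by
      intro h
      rw [Sym2.eq_iff] at h
      rcases h with ⟨rfl, rfl⟩ | ⟨-, rfl⟩
      · exact hwu rfl
      · exact huv rfl
    have huF' : s(w, u) ∈ F.erase s(v, w) := Finset.mem_erase.mpr ⟨hne1, huF⟩
    rw [UegPPos] at hP
    refine hP u huF' ?_
    set F'' := (F.erase s(v, w)).erase s(w, u) with hF''
    have hc1 : (F.erase s(v, w)).card < F.card := Finset.card_erase_lt_of_mem hw
    have hc2 : F''.card < (F.erase s(v, w)).card := Finset.card_erase_lt_of_mem huF'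
    have hsub : F'' ⊆ F := fun e he =>
      Finset.mem_of_mem_erase (Finset.mem_of_mem_erase he)
    refine ih F'' u (by omega) huS (fun x hx y hy hmem => hInd x hx y hy (hsub hmem)) ?_
    intro x hxS
    have key : ∀ y ∈ S, (s(x, y) ∈ F'' ↔ (s(x, y) ∈ F ∧ (x = w → (y ≠ v ∧ y ≠ u)))) := by
      intro y hyS
      have hyw : y ≠ w := fun h => hwS (h ▸ hyS)
      simp only [hF'', Finset.mem_erase]
      constructor
      · rintro ⟨h1, h2, h3⟩
        refine ⟨h3, fun hxw => ⟨?_, ?_⟩⟩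
        · rintro rfl
          apply h2
          rw [Sym2.eq_iff]; right; exact ⟨hxw, rfl⟩
        · rintro rfl
          apply h1
          rw [Sym2.eq_iff]; left; exact ⟨hxw, rfl⟩
      · rintro ⟨h1, h2⟩
        refine ⟨?_, ?_, h1⟩
        · intro h
          rw [Sym2.eq_iff] at h
          rcases h with ⟨rfl, rfl⟩ | ⟨rfl, rfl⟩
          · exact (h2 rfl).2 rfl
          · exact hwS hyS
        · intro h
          rw [Sym2.eq_iff] at h
          rcases h with ⟨rfl, rfl⟩ | ⟨rfl, rfl⟩
          · exact hyw rfl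
          · exact (h2 rfl).1 rfl
    by_cases hxw : x = w
    · subst hxw
      have : S.filter (fun y => s(x, y) ∈ F'') = (T.erase v).erase u := by
        ext y
        simp only [Finset.mem_filter, Finset.mem_erase, hT]
        constructor
        · intro ⟨hyS, hyF⟩
          have := (key y hyS).mp hyF
          exact ⟨(this.2 rfl).2, (this.2 rfl).1, hyS, this.1⟩
        · rintro ⟨hyu, hyv, hyS, hyF⟩
          exact ⟨hyS, (key y hyS).mpr ⟨hyF, fun _ => ⟨hyv, hyu⟩⟩⟩
      rw [this, Finset.card_erase_of_mem hu, Finset.card_erase_of_mem hvT]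
      rcases hTeven with ⟨k, hk⟩
      exact ⟨k - 1, by omega⟩
    · have : S.filter (fun y => s(x, y) ∈ F'') = S.filter (fun y => s(x, y) ∈ F) := by
        ext y
        simp only [Finset.mem_filter]
        constructor
        · intro ⟨hyS, hyF⟩
          exact ⟨hyS, ((key y hyS).mp hyF).1⟩
        · intro ⟨hyS, hyF⟩
          exact ⟨hyS, (key y hyS).mpr ⟨hyF, fun h => absurd h hxw⟩⟩
      rw [this]
      exact hEven x hxS


def Cpr (D c z : ℤ) : Prop := D ∣ (z - c) ∨ D ∣ (z + c)

instance (D c z : ℤ) : Decidable (Cpr D c z) := inferInstanceAs (Decidable (_ ∨ _))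

def Ppr (D c x y : ℤ) : Prop := ¬(Cpr D c (x - y) ↔ Cpr D c (x + y))

instance (D c x y : ℤ) : Decidable (Ppr D c x y) := inferInstanceAs (Decidable (¬ _))

lemma Cpr_neg (D c z : ℤ) : Cpr D c (-z) ↔ Cpr D c z := by
  unfold Cpr
  rw [show -z - c = -(z + c) by ring, show -z + c = -(z - c) by ring, dvd_neg, dvd_neg,
    or_comm]

lemma Cpr_shift (D c z t : ℤ) (h : D ∣ t) : Cpr D c (z + t) ↔ Cpr D c z := by
  unfold Cpr
  rw [show z + t - c = t + (z - c) by ring, show z + t + c = t + (z + c) by ring,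
    dvd_add_right h, dvd_add_right h]

lemma Cpr_parity (D c z : ℤ) (h2 : (2:ℤ) ∣ D) (h : ¬ (2:ℤ) ∣ (z - c)) : ¬ Cpr D c z := by
  rintro (hc | hc) <;> [exact h (dvd_trans h2 hc);
    exact h (by obtain ⟨k, hk⟩ := dvd_trans h2 hc; exact ⟨k - c, by omega⟩)]

lemma Ppr_x0 (D c y : ℤ) : ¬ Ppr D c 0 y := by
  unfold Ppr
  rw [not_not, show (0:ℤ) - y = -y by ring, show (0:ℤ) + y = y by ring, Cpr_neg]

lemma Ppr_y0 (D c x : ℤ) : ¬ Ppr D c x 0 := by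
  unfold Ppr
  rw [not_not, show x - (0:ℤ) = x by ring, show x + (0:ℤ) = x by ring]

lemma Ppr_xM (D c M y : ℤ) (h : D ∣ 2 * M) : ¬ Ppr D c M y := by
  unfold Ppr
  rw [not_not]
  have : M + y = -(M - y) + 2 * M := by ring
  rw [this, Cpr_shift _ _ _ _ h, Cpr_neg]

lemma Ppr_yN (D c x N : ℤ) (h : D ∣ 2 * N) : ¬ Ppr D c x N := by
  unfold Ppr
  rw [not_not]
  have : x + N = (x - N) + 2 * N := by ring
  rw [this, Cpr_shift _ _ _ _ h]

lemma even_four (D c x y : ℤ) :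
    Even ((({(x+1, y), (x-1, y), (x, y+1), (x, y-1)} : Finset (ℤ × ℤ)).filter
      (fun z => Ppr D c z.1 z.2)).card) := by
  rw [Finset.card_filter]
  rw [Finset.sum_insert (by simp [Prod.ext_iff] <;> omega),
    Finset.sum_insert (by simp [Prod.ext_iff] <;> omega),
    Finset.sum_insert (by simp [Prod.ext_iff] <;> omega),
    Finset.sum_singleton]
  simp only [Ppr, show (x+1) - y = x - y + 1 by ring, show (x+1) + y = x + y + 1 by ring,
    show (x-1) - y = x - y - 1 by ring, show (x-1) + y = x + y - 1 by ring,
    show x - (y+1) = x - y - 1 by ring, show x + (y+1) = x + y + 1 by ring,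
    show x - (y-1) = x - y + 1 by ring, show x + (y-1) = x + y - 1 by ring]
  rcases em (Cpr D c (x - y + 1)) with hA | hA <;>
    rcases em (Cpr D c (x - y - 1)) with hB | hB <;>
    rcases em (Cpr D c (x + y + 1)) with hE | hE <;>
    rcases em (Cpr D c (x + y - 1)) with hG | hG <;>
    simp [hA, hB, hE, hG] <;> decide

lemma Cpr_even (D c z : ℤ) (h2 : (2:ℤ) ∣ D) (h : Cpr D c z) : (2:ℤ) ∣ (z - c) := by
  by_contra h'
  exact Cpr_parity D c z h2 h' h

/-- For `m, n ≥ 1`, `d = gcd(m+1, n+1)` and a vertex `v = (a,b)` of the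
grid graph `G_{m×n}` (with `a = v.1.val + 1`, `b = v.2.val + 1`), if `d ∤ a` and `d ∤ b`,
then the UEG position `(G_{m×n}, v)` is a P-position. -/
theorem ueg_grid_ppos (m n : ℕ) (hm : 1 ≤ m) (hn : 1 ≤ n)
    (d : ℕ) (hd : d = Nat.gcd (m + 1) (n + 1)) (v : Fin m × Fin n)
    (ha : ¬ d ∣ (v.1.val + 1)) (hb : ¬ d ∣ (v.2.val + 1)) :
    UegPPos (gridGraph m n).edgeFinset v := by
  set D : ℤ := 2 * (d : ℤ) with hD
  set c : ℤ := ((v.1.val : ℤ) + 1) - ((v.2.val : ℤ) + 1) with hc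
  have hdM : (d : ℤ) ∣ ((m : ℤ) + 1) := by
    have : d ∣ (m + 1) := hd ▸ Nat.gcd_dvd_left _ _
    exact_mod_cast Int.natCast_dvd_natCast.mpr this
  have hdN : (d : ℤ) ∣ ((n : ℤ) + 1) := by
    have : d ∣ (n + 1) := hd ▸ Nat.gcd_dvd_right _ _
    exact_mod_cast Int.natCast_dvd_natCast.mpr this
  have hDM : D ∣ 2 * ((m : ℤ) + 1) := mul_dvd_mul_left 2 hdM
  have hDN : D ∣ 2 * ((n : ℤ) + 1) := mul_dvd_mul_left 2 hdN
  have h2D : (2:ℤ) ∣ D := Dvd.intro _ rfl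
  have hda : ¬ (d : ℤ) ∣ ((v.1.val : ℤ) + 1) := by
    intro h; apply ha; exact_mod_cast h
  have hdb : ¬ (d : ℤ) ∣ ((v.2.val : ℤ) + 1) := by
    intro h; apply hb; exact_mod_cast h
  set S : Finset (Fin m × Fin n) :=
    Finset.univ.filter (fun q => Ppr D c ((q.1.val : ℤ) + 1) ((q.2.val : ℤ) + 1)) with hS
  have hmemS : ∀ q : Fin m × Fin n,
      q ∈ S ↔ Ppr D c ((q.1.val : ℤ) + 1) ((q.2.val : ℤ) + 1) := by
    intro q; simp [hS]
  -- v ∈ S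
  have hvS : v ∈ S := by
    rw [hmemS]
    intro hiff
    have h1 : Cpr D c (((v.1.val : ℤ) + 1) - ((v.2.val : ℤ) + 1)) := by
      left; rw [hc]; simp
    have h2 := hiff.mp h1
    rcases h2 with h2 | h2
    · rw [show ((v.1.val : ℤ) + 1) + ((v.2.val : ℤ) + 1) - c = 2 * ((v.2.val : ℤ) + 1) by
        rw [hc]; ring] at h2
      rw [hD] at h2
      exact hdb ((mul_dvd_mul_iff_left (two_ne_zero)).mp h2)
    · rw [show ((v.1.val : ℤ) + 1) + ((v.2.val : ℤ) + 1) + c = 2 * ((v.1.val : ℤ) + 1) by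
        rw [hc]; ring] at h2
      rw [hD] at h2
      exact hda ((mul_dvd_mul_iff_left (two_ne_zero)).mp h2)
  -- independence
  have hInd : ∀ p ∈ S, ∀ q ∈ S, s(p, q) ∉ (gridGraph m n).edgeFinset := by
    intro p hp q hq hpq
    rw [SimpleGraph.mem_edgeFinset, SimpleGraph.mem_edgeSet] at hpq
    have hadj : ((p.1.val : ℤ) - q.1.val).natAbs + ((p.2.val : ℤ) - q.2.val).natAbs = 1 := hpq
    rw [hmemS] at hp hq
    set xp : ℤ := (p.1.val : ℤ) + 1; set yp : ℤ := (p.2.val : ℤ) + 1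
    set xq : ℤ := (q.1.val : ℤ) + 1; set yq : ℤ := (q.2.val : ℤ) + 1
    have hdiffp : (2:ℤ) ∣ (xp - yp - c) := by
      by_cases h1 : Cpr D c (xp - yp)
      · exact Cpr_even D c _ h2D h1
      · by_cases h2 : Cpr D c (xp + yp)
        · have := Cpr_even D c _ h2D h2
          omega
        · exact absurd (iff_of_false h1 h2) hp
    have hsump : (2:ℤ) ∣ (xp + yp - c) := by omega
    have hodd1 : ¬ (2:ℤ) ∣ (xq - yq - (xp - yp)) := by omega
    have hq1 : ¬ Cpr D c (xq - yq) := Cpr_parity D c _ h2D (by omega)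
    have hq2 : ¬ Cpr D c (xq + yq) := Cpr_parity D c _ h2D (by omega)
    exact hq (iff_of_false hq1 hq2)
  -- even degree in S
  have hEven : ∀ p, p ∉ S →
      Even ((S.filter (fun q => s(p, q) ∈ (gridGraph m n).edgeFinset)).card) := by
    intro p _
    set x : ℤ := (p.1.val : ℤ) + 1 with hx
    set y : ℤ := (p.2.val : ℤ) + 1 with hy
    set g : Fin m × Fin n → ℤ × ℤ := fun q => ((q.1.val : ℤ) + 1, (q.2.val : ℤ) + 1) with hg
    have hginj : Function.Injective g := by
      intro q r h
      have h1 : ((q.1.val : ℤ) + 1) = (r.1.val : ℤ) + 1 := congrArg Prod.fst h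
      have h2 : ((q.2.val : ℤ) + 1) = (r.2.val : ℤ) + 1 := congrArg Prod.snd h
      exact Prod.ext (Fin.ext (by omega)) (Fin.ext (by omega))
    have himg : (S.filter (fun q => s(p, q) ∈ (gridGraph m n).edgeFinset)).image g =
        (({(x+1, y), (x-1, y), (x, y+1), (x, y-1)} : Finset (ℤ × ℤ)).filter
          (fun z => Ppr D c z.1 z.2)) := by
      ext z
      simp only [Finset.mem_image, Finset.mem_filter, hmemS, SimpleGraph.mem_edgeFinset,
        SimpleGraph.mem_edgeSet, Finset.mem_insert, Finset.mem_singleton]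
      constructor
      · rintro ⟨q, ⟨⟨hqS, hadj⟩, rfl⟩⟩
        have hadj' : ((p.1.val : ℤ) - q.1.val).natAbs + ((p.2.val : ℤ) - q.2.val).natAbs = 1 :=
          hadj
        refine ⟨?_, hqS⟩
        simp only [hg, Prod.ext_iff]
        omega
      · rintro ⟨hz4, hPz⟩
        have hzx : 1 ≤ z.1 ∧ z.1 ≤ (m : ℤ) ∧ 1 ≤ z.2 ∧ z.2 ≤ (n : ℤ) := by
          rcases hz4 with h | h | h | h <;> rw [h] at hPz ⊢
          · constructor
            · omega
            refine ⟨?_, by omega, by omega⟩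
            by_contra hcon
            have : x + 1 = (m : ℤ) + 1 := by omega
            rw [this] at hPz
            exact Ppr_xM D c _ y hDM hPz
          · refine ⟨?_, by omega, by omega, by omega⟩
            by_contra hcon
            have : x - 1 = 0 := by omega
            rw [this] at hPz
            exact Ppr_x0 D c y hPz
          · refine ⟨by omega, by omega, by omega, ?_⟩
            by_contra hcon
            have : y + 1 = (n : ℤ) + 1 := by omega
            rw [this] at hPz
            exact Ppr_yN D c x _ hDN hPz
          · refine ⟨by omega, by omega, ?_, by omega⟩
            by_contra hcon
            have : y - 1 = 0 := by omega
            rw [this] at hPz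
            exact Ppr_y0 D c x hPz
        obtain ⟨hz1, hz2, hz3, hz4'⟩ := hzx
        refine ⟨(⟨(z.1 - 1).toNat, by omega⟩, ⟨(z.2 - 1).toNat, by omega⟩), ⟨⟨?_, ?_⟩, ?_⟩⟩
        · convert hPz using 2 <;> simp <;> omega
        · show ((p.1.val : ℤ) - _).natAbs + ((p.2.val : ℤ) - _).natAbs = 1
          simp only []
          rcases hz4 with h | h | h | h <;>
            (rw [h] at hz1 hz2 hz3 hz4' ⊢; simp only [Prod.fst, Prod.snd] at *) <;> omega
        · simp only [hg, Prod.ext_iff]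
          constructor <;> simp <;> omega
    have hcard := Finset.card_image_of_injective
      (S.filter (fun q => s(p, q) ∈ (gridGraph m n).edgeFinset)) hginj
    rw [← hcard, himg]
    exact even_four D c x y
  exact kernel_ppos_aux S _ _ v le_rfl hvS hInd hEven
end

section
/- Let m, n ≥ 1, let G = G_{m×n} be the grid graph, let d = gcd(m+1, n+1), and let v = (a,b) be a vertex of G with d ∤ a and d ∤ b. Then there exists an even kernel of G containing v. -/
/-- auxiliary predicate: `t ≡ ±c (mod D)` -/
def ggEK (D c t : ℤ) : Prop := D ∣ (t - c) ∨ D ∣ (t + c)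

lemma ggEK_refl {d L : ℤ} (c : ℤ) (hL : d ∣ L) (t : ℤ) :
    ggEK (2*d) c (L + t) ↔ ggEK (2*d) c (L - t) := by
  obtain ⟨k, rfl⟩ := hL
  have fwd : ∀ s : ℤ, ggEK (2*d) c (d*k + s) → ggEK (2*d) c (d*k - s) := by
    rintro s (⟨j, hj⟩ | ⟨j, hj⟩)
    · exact Or.inr ⟨k - j, by linear_combination -hj⟩
    · exact Or.inl ⟨k - j, by linear_combination -hj⟩
  constructor
  · exact fwd t
  · intro h
    have h2 := fwd (-t) (by rwa [show d*k + -t = d*k - t by ring])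
    rwa [show d*k - -t = d*k + t by ring] at h2

lemma ggEK_neg {d : ℤ} (c t : ℤ) : ggEK (2*d) c t ↔ ggEK (2*d) c (-t) := by
  have := ggEK_refl (d := d) c (dvd_zero d) t
  rwa [zero_add, zero_sub] at this

lemma ggEK_par {d c t : ℤ} (h : ggEK (2*d) c t) : (2:ℤ) ∣ (t - c) := by
  rcases h with ⟨j, hj⟩ | ⟨j, hj⟩
  · exact ⟨d*j, by linear_combination hj⟩
  · exact ⟨d*j - c, by linear_combination hj⟩

def gridSEK (m n : ℕ) (D c : ℤ) : Set (Fin m × Fin n) :=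
  {p | Xor' (ggEK D c (((p.1.val : ℤ) + 1) + ((p.2.val : ℤ) + 1)))
            (ggEK D c (((p.1.val : ℤ) + 1) - ((p.2.val : ℤ) + 1)))}

lemma gridEK_even (m n : ℕ) (d c : ℤ)
    (hdm : d ∣ ((m:ℤ)+1)) (hdn : d ∣ ((n:ℤ)+1)) (u : Fin m × Fin n) :
    Even {w : Fin m × Fin n | w ∈ gridSEK m n (2*d) c ∧ (gridGraph m n).Adj u w}.ncard := by
  classical
  set x : ℤ := (u.1.val : ℤ) + 1 with hxdef
  set y : ℤ := (u.2.val : ℤ) + 1 with hydef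
  have hx1 : 1 ≤ x := by rw [hxdef]; omega
  have hx2 : x ≤ m := by rw [hxdef]; have := u.1.isLt; omega
  have hy1 : 1 ≤ y := by rw [hydef]; omega
  have hy2 : y ≤ n := by rw [hydef]; have := u.2.isLt; omega
  have hAdj : ∀ p q : Fin m × Fin n, (gridGraph m n).Adj p q ↔
      ((p.1.val : ℤ) - q.1.val).natAbs + ((p.2.val : ℤ) - q.2.val).natAbs = 1 :=
    fun p q => Iff.rfl
  set F : Finset (Fin m × Fin n) :=
    Finset.univ.filter (fun w => w ∈ gridSEK m n (2*d) c ∧ (gridGraph m n).Adj u w) with hFdef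
  have hTF : {w : Fin m × Fin n | w ∈ gridSEK m n (2*d) c ∧ (gridGraph m n).Adj u w} = ↑F := by
    ext w; simp [hFdef]
  rw [hTF, Set.ncard_coe_finset]
  set e : (Fin m × Fin n) → ℤ × ℤ := fun w => ((w.1.val : ℤ) + 1, (w.2.val : ℤ) + 1) with hedef
  have he : Function.Injective e := by
    intro w1 w2 hh
    have h1 := congrArg Prod.fst hh
    have h2 := congrArg Prod.snd hh
    simp only [hedef] at h1 h2
    have e1 : w1.1 = w2.1 := Fin.ext (by omega)
    have e2 : w1.2 = w2.2 := Fin.ext (by omega)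
    exact Prod.ext_iff.mpr ⟨e1, e2⟩
  rw [← Finset.card_image_of_injective F he]
  set Q : ℤ × ℤ → Prop := fun z =>
    (1 ≤ z.1 ∧ z.1 ≤ m ∧ 1 ≤ z.2 ∧ z.2 ≤ n) ∧
      Xor' (ggEK (2*d) c (z.1 + z.2)) (ggEK (2*d) c (z.1 - z.2)) with hQdef
  set C : Finset (ℤ × ℤ) := {(x-1,y),(x+1,y),(x,y-1),(x,y+1)} with hCdef
  have himg : F.image e = C.filter Q := by
    ext z
    simp only [Finset.mem_image, Finset.mem_filter, hCdef, Finset.mem_insert,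
      Finset.mem_singleton]
    constructor
    · rintro ⟨w, hwF, rfl⟩
      simp only [hFdef, Finset.mem_filter, Finset.mem_univ, true_and] at hwF
      obtain ⟨hwS, hwA⟩ := hwF
      rw [hAdj] at hwA
      have hmem := hwS
      rw [gridSEK, Set.mem_setOf_eq] at hmem
      refine ⟨?_, ?_, ?_⟩
      · simp only [hedef, Prod.ext_iff]
        omega
      · simp only [hedef, hQdef]
        have := w.1.isLt; have := w.2.isLt
        exact ⟨by omega, by omega, by omega, by omega⟩
      · simp only [hedef, hQdef]
        exact hmem
    · rintro ⟨hzC, hzr, hzxor⟩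
      obtain ⟨hz1, hz2, hz3, hz4⟩ := hzr
      refine ⟨(⟨(z.1 - 1).toNat, by omega⟩, ⟨(z.2 - 1).toNat, by omega⟩), ?_, ?_⟩
      · simp only [hFdef, Finset.mem_filter, Finset.mem_univ, true_and]
        constructor
        · rw [gridSEK, Set.mem_setOf_eq]
          show Xor'
            (ggEK (2*d) c ((((z.1 - 1).toNat : ℤ) + 1) + (((z.2 - 1).toNat : ℤ) + 1)))
            (ggEK (2*d) c ((((z.1 - 1).toNat : ℤ) + 1) - (((z.2 - 1).toNat : ℤ) + 1)))
          have e1 : (((z.1 - 1).toNat : ℤ) + 1) = z.1 := by omega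
          have e2 : (((z.2 - 1).toNat : ℤ) + 1) = z.2 := by omega
          rw [e1, e2]
          exact hzxor
        · rw [hAdj]
          simp only [Fin.val_mk]
          rcases hzC with rfl | rfl | rfl | rfl <;> omega
      · simp only [hedef, Prod.ext_iff, Fin.val_mk]
        constructor <;> omega
  rw [himg, Finset.card_filter, hCdef]
  have hne1 : ((x-1,y) : ℤ×ℤ) ∉ ({(x+1,y),(x,y-1),(x,y+1)} : Finset (ℤ×ℤ)) := by
    simp only [Finset.mem_insert, Finset.mem_singleton, Prod.mk.injEq]; omega
  have hne2 : ((x+1,y) : ℤ×ℤ) ∉ ({(x,y-1),(x,y+1)} : Finset (ℤ×ℤ)) := by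
    simp only [Finset.mem_insert, Finset.mem_singleton, Prod.mk.injEq]; omega
  have hne3 : ((x,y-1) : ℤ×ℤ) ∉ ({(x,y+1)} : Finset (ℤ×ℤ)) := by
    simp only [Finset.mem_singleton, Prod.mk.injEq]; omega
  simp only [Finset.sum_insert hne1, Finset.sum_insert hne2, Finset.sum_insert hne3,
    Finset.sum_singleton]
  have hc1 : ((1 ≤ x - 1 ∧ x - 1 ≤ (m:ℤ) ∧ 1 ≤ y ∧ y ≤ (n:ℤ)) ∧
      Xor' (ggEK (2*d) c (x - 1 + y)) (ggEK (2*d) c (x - 1 - y))) ↔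
      Xor' (ggEK (2*d) c (x+y-1)) (ggEK (2*d) c (x-y-1)) := by
    constructor
    · rintro ⟨-, hx⟩
      rwa [show x-1+y = x+y-1 by ring, show x-1-y = x-y-1 by ring] at hx
    · intro hx
      by_cases hxx : 2 ≤ x
      · exact ⟨⟨by omega, by omega, by omega, by omega⟩,
          by rwa [show x-1+y = x+y-1 by ring, show x-1-y = x-y-1 by ring]⟩
      · exfalso
        have hiff : ggEK (2*d) c (x+y-1) ↔ ggEK (2*d) c (x-y-1) := by
          rw [show x+y-1 = y by omega, show x-y-1 = -y by omega]
          exact ggEK_neg c y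
        rcases hx with ⟨h, h'⟩ | ⟨h, h'⟩
        · exact h' (hiff.mp h)
        · exact h' (hiff.mpr h)
  have hc2 : ((1 ≤ x + 1 ∧ x + 1 ≤ (m:ℤ) ∧ 1 ≤ y ∧ y ≤ (n:ℤ)) ∧
      Xor' (ggEK (2*d) c (x + 1 + y)) (ggEK (2*d) c (x + 1 - y))) ↔
      Xor' (ggEK (2*d) c (x+y+1)) (ggEK (2*d) c (x-y+1)) := by
    constructor
    · rintro ⟨-, hx⟩
      rwa [show x+1+y = x+y+1 by ring, show x+1-y = x-y+1 by ring] at hx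
    · intro hx
      by_cases hxx : x + 1 ≤ (m:ℤ)
      · exact ⟨⟨by omega, by omega, by omega, by omega⟩,
          by rwa [show x+1+y = x+y+1 by ring, show x+1-y = x-y+1 by ring]⟩
      · exfalso
        have hiff : ggEK (2*d) c (x+y+1) ↔ ggEK (2*d) c (x-y+1) := by
          rw [show x+y+1 = ((m:ℤ)+1) + y by omega, show x-y+1 = ((m:ℤ)+1) - y by omega]
          exact ggEK_refl c hdm y
        rcases hx with ⟨h, h'⟩ | ⟨h, h'⟩
        · exact h' (hiff.mp h)
        · exact h' (hiff.mpr h)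
  have hc3 : ((1 ≤ x ∧ x ≤ (m:ℤ) ∧ 1 ≤ y - 1 ∧ y - 1 ≤ (n:ℤ)) ∧
      Xor' (ggEK (2*d) c (x + (y - 1))) (ggEK (2*d) c (x - (y - 1)))) ↔
      Xor' (ggEK (2*d) c (x+y-1)) (ggEK (2*d) c (x-y+1)) := by
    constructor
    · rintro ⟨-, hx⟩
      rwa [show x+(y-1) = x+y-1 by ring, show x-(y-1) = x-y+1 by ring] at hx
    · intro hx
      by_cases hyy : 2 ≤ y
      · exact ⟨⟨by omega, by omega, by omega, by omega⟩,
          by rwa [show x+(y-1) = x+y-1 by ring, show x-(y-1) = x-y+1 by ring]⟩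
      · exfalso
        have hiff : ggEK (2*d) c (x+y-1) ↔ ggEK (2*d) c (x-y+1) := by
          rw [show x+y-1 = x by omega, show x-y+1 = x by omega]
        rcases hx with ⟨h, h'⟩ | ⟨h, h'⟩
        · exact h' (hiff.mp h)
        · exact h' (hiff.mpr h)
  have hc4 : ((1 ≤ x ∧ x ≤ (m:ℤ) ∧ 1 ≤ y + 1 ∧ y + 1 ≤ (n:ℤ)) ∧
      Xor' (ggEK (2*d) c (x + (y + 1))) (ggEK (2*d) c (x - (y + 1)))) ↔
      Xor' (ggEK (2*d) c (x+y+1)) (ggEK (2*d) c (x-y-1)) := by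
    constructor
    · rintro ⟨-, hx⟩
      rwa [show x+(y+1) = x+y+1 by ring, show x-(y+1) = x-y-1 by ring] at hx
    · intro hx
      by_cases hyy : y + 1 ≤ (n:ℤ)
      · exact ⟨⟨by omega, by omega, by omega, by omega⟩,
          by rwa [show x+(y+1) = x+y+1 by ring, show x-(y+1) = x-y-1 by ring]⟩
      · exfalso
        have hiff : ggEK (2*d) c (x+y+1) ↔ ggEK (2*d) c (x-y-1) := by
          rw [show x+y+1 = ((n:ℤ)+1) + x by omega,
            show x-y-1 = -(((n:ℤ)+1) - x) by omega]
          exact (ggEK_refl c hdn x).trans (ggEK_neg c (((n:ℤ)+1) - x))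
        rcases hx with ⟨h, h'⟩ | ⟨h, h'⟩
        · exact h' (hiff.mp h)
        · exact h' (hiff.mpr h)
  rw [Nat.even_iff]
  simp only [hc1, hc2, hc3, hc4]
  rcases em (ggEK (2*d) c (x+y+1)) with hα | hα <;>
  rcases em (ggEK (2*d) c (x+y-1)) with hβ | hβ <;>
  rcases em (ggEK (2*d) c (x-y+1)) with hγ | hγ <;>
  rcases em (ggEK (2*d) c (x-y-1)) with hδ | hδ
  all_goals simp [Xor', hα, hβ, hγ, hδ]

/-- For `m, n ≥ 1`, `d = gcd(m+1, n+1)` and a vertex `v = (a,b)` of the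
grid graph `G_{m×n}` (with `a = v.1.val + 1`, `b = v.2.val + 1`) such that `d ∤ a` and
`d ∤ b`, there exists an even kernel of `G_{m×n}` containing `v`. -/
theorem grid_exists_evenKernel (m n : ℕ) (hm : 1 ≤ m) (hn : 1 ≤ n)
    (d : ℕ) (hd : d = Nat.gcd (m + 1) (n + 1)) (v : Fin m × Fin n)
    (ha : ¬ d ∣ (v.1.val + 1)) (hb : ¬ d ∣ (v.2.val + 1)) :
    ∃ S : Set (Fin m × Fin n), IsEvenKernel (gridGraph m n) S ∧ v ∈ S := by
  classical
  set c : ℤ := ((v.1.val : ℤ) + 1) + ((v.2.val : ℤ) + 1) with hcdef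
  have hdm : (d:ℤ) ∣ ((m:ℤ)+1) := by
    have h : d ∣ (m+1) := hd ▸ Nat.gcd_dvd_left (m+1) (n+1)
    exact_mod_cast h
  have hdn : (d:ℤ) ∣ ((n:ℤ)+1) := by
    have h : d ∣ (n+1) := hd ▸ Nat.gcd_dvd_right (m+1) (n+1)
    exact_mod_cast h
  have hv : v ∈ gridSEK m n (2*(d:ℤ)) c := by
    rw [gridSEK, Set.mem_setOf_eq]
    refine Or.inl ⟨Or.inl ⟨0, by rw [hcdef]; ring⟩, ?_⟩
    rintro (⟨j, hj⟩ | ⟨j, hj⟩)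
    · rw [hcdef] at hj
      have h2 : 2*((v.2.val:ℤ)+1) = 2*((d:ℤ)*(-j)) := by linear_combination -hj
      have hdb : (d:ℤ) ∣ ((v.2.val:ℤ)+1) := ⟨-j, mul_left_cancel₀ two_ne_zero h2⟩
      exact hb (by exact_mod_cast hdb)
    · rw [hcdef] at hj
      have h2 : 2*((v.1.val:ℤ)+1) = 2*((d:ℤ)*j) := by linear_combination hj
      have hda : (d:ℤ) ∣ ((v.1.val:ℤ)+1) := ⟨j, mul_left_cancel₀ two_ne_zero h2⟩
      exact ha (by exact_mod_cast hda)
  refine ⟨gridSEK m n (2*(d:ℤ)) c, ⟨⟨v, hv⟩, ?_, ?_⟩, hv⟩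
  · intro u hu w hw hadj
    have hpar : ∀ p : Fin m × Fin n, p ∈ gridSEK m n (2*(d:ℤ)) c →
        (2:ℤ) ∣ (((p.1.val:ℤ)+1) + ((p.2.val:ℤ)+1) - c) := by
      intro p hp
      rw [gridSEK, Set.mem_setOf_eq] at hp
      rcases hp with ⟨h, -⟩ | ⟨h, -⟩
      · exact ggEK_par h
      · have := ggEK_par h
        omega
    have h1 := hpar u hu
    have h2 := hpar w hw
    have hA : ((u.1.val:ℤ) - w.1.val).natAbs + ((u.2.val:ℤ) - w.2.val).natAbs = 1 := hadj
    omega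
  · intro u _
    exact gridEK_even m n (d:ℤ) c hdm hdn u
end
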